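/- The polynomial equation x^4 + 2t^2x^2 - 8t^2x + t^4 = 0 has no integer solutions (t, x) with t > 2. -/
import Mathlib

/-- The equation `x⁴ + 2t²x² - 8t²x + t⁴ = 0` has no integer solutions with `t > 2`. -/
theorem dQ_no_integral_points (t x : ℤ) (ht : 2 < t) :
    x ^ 4 + 2 * t ^ 2 * x ^ 2 - 8 * t ^ 2 * x + t ^ 4 ≠ 0 := by
  intro h
  have h9 : 9 ≤ t ^ 2 := by nlinarith
  have h94 : 9 * t ^ 2 ≤ t ^ 4 := by nlinarith
  have hx : 0 < x := by
    by_contra hx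
    push_neg at hx
    nlinarith [mul_nonneg (by positivity : (0:ℤ) ≤ t ^ 2) (neg_nonneg.mpr hx),
      mul_nonneg (sq_nonneg t) (sq_nonneg x), sq_nonneg (x ^ 2)]
  have hx2 : x ≤ 2 := by
    nlinarith [sq_nonneg (x - t), sq_nonneg (x * t),
      mul_pos (by positivity : (0:ℤ) < t ^ 2) hx]
  interval_cases x
  · linarith
  · linarith
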